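/- Let d ≥ 1, Δ > 0, ε > 0, and let μ and ν be probability measures on ℝ^d. Suppose there exists a coupling γ of μ and ν (a probability measure on ℝ^d × ℝ^d with first marginal μ and second marginal ν) such that γ({(x,y) : ‖x−y‖₁ > Δ}) = 0. Then for every measurable set S ⊆ ℝ^d, (μ ∗ Laplace^⊗d(Δ/ε))(S) ≤ exp(ε)·(ν ∗ Laplace^⊗d(Δ/ε))(S), and symmetrically (ν ∗ Laplace^⊗d(Δ/ε))(S) ≤ exp(ε)·(μ ∗ Laplace^⊗d(Δ/ε))(S). -/

import Mathlib

open MeasureTheory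
open scoped ENNReal

noncomputable section

/-- The d-fold product of the Laplace(b) distribution on ℝ^d, given by its density. -/
def laplacePi (d : ℕ) (b : ℝ) : Measure (Fin d → ℝ) :=
  volume.withDensity fun x => ENNReal.ofReal (∏ i, (1 / (2 * b)) * Real.exp (-|x i| / b))

/-- Convolution of two measures on ℝ^d: the pushforward of the product under addition. -/
def mconv {d : ℕ} (μ ν : Measure (Fin d → ℝ)) : Measure (Fin d → ℝ) :=
  (μ.prod ν).map fun p => p.1 + p.2

instance (d : ℕ) (b : ℝ) : SFinite (laplacePi d b) := by
  unfold laplacePi; infer_instance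

lemma lap_cont (d : ℕ) (b : ℝ) :
    Continuous (fun z : Fin d → ℝ => ∏ i, (1 / (2 * b)) * Real.exp (-|z i| / b)) := by
  apply continuous_finset_prod
  intro i _
  exact continuous_const.mul ((Real.continuous_exp).comp
    (by fun_prop))

lemma ratio_lemma (d : ℕ) (Δ ε : ℝ) (hΔ : 0 < Δ) (hε : 0 < ε)
    (x y s : Fin d → ℝ) (h : ∑ i, |x i - y i| ≤ Δ) :
    ∏ i, (1 / (2 * (Δ / ε))) * Real.exp (-|s i - x i| / (Δ / ε))
      ≤ Real.exp ε * ∏ i, (1 / (2 * (Δ / ε))) * Real.exp (-|s i - y i| / (Δ / ε)) := by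
  set b : ℝ := Δ / ε with hbdef
  have hb : 0 < b := div_pos hΔ hε
  have hprod : ∀ w : Fin d → ℝ,
      ∏ i, (1 / (2 * b)) * Real.exp (-|w i| / b)
        = (1 / (2 * b)) ^ d * Real.exp (∑ i, -|w i| / b) := by
    intro w
    rw [Finset.prod_mul_distrib, Finset.prod_const, Real.exp_sum]
    simp
  have h1 := hprod (fun i => s i - x i)
  have h2 := hprod (fun i => s i - y i)
  rw [h1, h2, mul_comm (Real.exp ε), mul_assoc, ← Real.exp_add]
  apply mul_le_mul_of_nonneg_left _ (by positivity)
  apply Real.exp_le_exp.2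
  rw [← sub_le_iff_le_add']
  have heq : ∑ i, -|s i - x i| / b - ∑ i, -|s i - y i| / b
      = ∑ i, (|s i - y i| - |s i - x i|) / b := by
    rw [← Finset.sum_sub_distrib]
    congr 1; ext i; ring
  rw [heq]
  calc ∑ i, (|s i - y i| - |s i - x i|) / b
      ≤ ∑ i, |x i - y i| / b := by
        apply Finset.sum_le_sum
        intro i _
        apply (div_le_div_iff_of_pos_right hb).2
        have := abs_sub_abs_le_abs_sub (s i - y i) (s i - x i)
        have e : s i - y i - (s i - x i) = x i - y i := by ring
        rwa [e] at this
    _ = (∑ i, |x i - y i|) / b := by rw [Finset.sum_div]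
    _ ≤ Δ / b := (div_le_div_iff_of_pos_right hb).2 h
    _ = ε := by rw [hbdef]; field_simp

/-- Convolution with the Laplace density, written as an iterated integral. -/
lemma mconv_eq (d : ℕ) (b : ℝ) (μ : Measure (Fin d → ℝ)) [SFinite μ]
    (S : Set (Fin d → ℝ)) (hS : MeasurableSet S) :
    mconv μ (laplacePi d b) S
      = ∫⁻ x, (∫⁻ s in S,
          ENNReal.ofReal (∏ i, (1 / (2 * b)) * Real.exp (-|s i - x i| / b)) ∂volume) ∂μ := by
  set f : (Fin d → ℝ) → ℝ≥0∞ :=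
    fun z => ENNReal.ofReal (∏ i, (1 / (2 * b)) * Real.exp (-|z i| / b)) with hf
  have hfm : Measurable f := (lap_cont d b).measurable.ennreal_ofReal
  have hadd : Measurable (fun p : (Fin d → ℝ) × (Fin d → ℝ) => p.1 + p.2) :=
    measurable_fst.add measurable_snd
  rw [mconv, Measure.map_apply hadd hS, Measure.prod_apply (hadd hS)]
  apply lintegral_congr
  intro x
  have hset : MeasurableSet {z : Fin d → ℝ | x + z ∈ S} :=
    (measurable_const_add x) hS
  have h1 : Prod.mk x ⁻¹' ((fun p : (Fin d → ℝ) × (Fin d → ℝ) => p.1 + p.2) ⁻¹' S)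
      = {z | x + z ∈ S} := rfl
  rw [h1, laplacePi, withDensity_apply _ hset]
  have key : ∀ g : (Fin d → ℝ) → ℝ≥0∞,
      ∫⁻ z in {z | x + z ∈ S}, g z ∂volume = ∫⁻ s in S, g (s - x) ∂volume := by
    intro g
    rw [← lintegral_indicator hset, ← lintegral_indicator hS]
    calc ∫⁻ z, ({z | x + z ∈ S}).indicator g z ∂volume
        = ∫⁻ z, S.indicator (fun s => g (s - x)) (z + x) ∂volume := by
          apply lintegral_congr
          intro z
          show ({z | x + z ∈ S}).indicator g z = S.indicator (fun s => g (s - x)) (z + x)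
          unfold Set.indicator
          simp only [Set.mem_setOf_eq]
          rw [add_comm z x, add_sub_cancel_left]
          rfl
      _ = ∫⁻ s, S.indicator (fun s => g (s - x)) s ∂volume :=
          lintegral_add_right_eq_self _ x
  exact key f

lemma one_direction (d : ℕ) (Δ ε : ℝ) (hΔ : 0 < Δ) (hε : 0 < ε)
    (μ ν : Measure (Fin d → ℝ))
    (γ : Measure ((Fin d → ℝ) × (Fin d → ℝ))) (hγ : IsProbabilityMeasure γ)
    (hfst : γ.map Prod.fst = μ) (hsnd : γ.map Prod.snd = ν)
    (hcoupling : γ {p | Δ < ∑ i, |p.1 i - p.2 i|} = 0)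
    (S : Set (Fin d → ℝ)) (hS : MeasurableSet S) :
    mconv μ (laplacePi d (Δ / ε)) S
      ≤ ENNReal.ofReal (Real.exp ε) * mconv ν (laplacePi d (Δ / ε)) S := by
  set b : ℝ := Δ / ε with hbdef
  have hμ : SFinite μ := by rw [← hfst]; infer_instance
  have hν : SFinite ν := by rw [← hsnd]; infer_instance
  set F : (Fin d → ℝ) → (Fin d → ℝ) → ℝ≥0∞ :=
    fun x s => ENNReal.ofReal (∏ i, (1 / (2 * b)) * Real.exp (-|s i - x i| / b)) with hF
  -- measurability of the kernel on the product
  have hFm : Measurable (fun p : (Fin d → ℝ) × (Fin d → ℝ) => F p.1 p.2) := by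
    apply Measurable.ennreal_ofReal
    exact ((lap_cont d b).comp (continuous_snd.sub continuous_fst)).measurable
  have hI : Measurable (fun x => ∫⁻ s in S, F x s ∂volume) := by
    have : ∀ x, ∫⁻ s in S, F x s ∂volume
        = ∫⁻ s, (Set.univ ×ˢ S).indicator (fun p : (Fin d → ℝ) × (Fin d → ℝ) => F p.1 p.2) (x, s) ∂volume := by
      intro x
      rw [← lintegral_indicator hS]
      apply lintegral_congr
      intro s
      by_cases hs : s ∈ S
      · rw [Set.indicator_of_mem hs, Set.indicator_of_mem (by simp [hs])]
      · rw [Set.indicator_of_notMem hs, Set.indicator_of_notMem (by simp [hs])]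
    simp_rw [this]
    exact (hFm.indicator (MeasurableSet.univ.prod hS)).lintegral_prod_right'
  have hμeq : mconv μ (laplacePi d b) S = ∫⁻ p, (∫⁻ s in S, F p.1 s ∂volume) ∂γ := by
    rw [mconv_eq d b μ S hS, ← hfst, lintegral_map hI measurable_fst]
  have hνeq : mconv ν (laplacePi d b) S = ∫⁻ p, (∫⁻ s in S, F p.2 s ∂volume) ∂γ := by
    rw [mconv_eq d b ν S hS, ← hsnd, lintegral_map hI measurable_snd]
  rw [hμeq, hνeq, ← lintegral_const_mul' _ _ ENNReal.ofReal_ne_top]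
  apply lintegral_mono_ae
  have hae : ∀ᵐ p ∂γ, ∑ i, |p.1 i - p.2 i| ≤ Δ := by
    rw [ae_iff]
    convert hcoupling using 2
    ext p
    simp [not_le]
  filter_upwards [hae] with p hp
  calc ∫⁻ s in S, F p.1 s ∂volume
      ≤ ∫⁻ s in S, ENNReal.ofReal (Real.exp ε) * F p.2 s ∂volume := by
        apply lintegral_mono
        intro s
        simp only [hF]
        rw [← ENNReal.ofReal_mul (Real.exp_pos ε).le]
        exact ENNReal.ofReal_le_ofReal (ratio_lemma d Δ ε hΔ hε p.1 p.2 s hp)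
    _ = ENNReal.ofReal (Real.exp ε) * ∫⁻ s in S, F p.2 s ∂volume :=
        lintegral_const_mul' _ _ ENNReal.ofReal_ne_top

/-- **Laplace perturbation (Lemma 2 of the paper).**
If there is a coupling `γ` of `μ` and `ν` under which `‖x - y‖₁ ≤ Δ` almost surely
(i.e. `W_∞^{ℓ1}(μ,ν) ≤ Δ`), then convolving both measures with `Laplace^⊗d(Δ/ε)`
makes them `ε`-indistinguishable in max divergence, in both directions. -/
theorem laplace_perturbation
    (d : ℕ) (hd : 1 ≤ d) (Δ ε : ℝ) (hΔ : 0 < Δ) (hε : 0 < ε)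
    (μ ν : Measure (Fin d → ℝ))
    (hμ : IsProbabilityMeasure μ) (hν : IsProbabilityMeasure ν)
    (γ : Measure ((Fin d → ℝ) × (Fin d → ℝ))) (hγ : IsProbabilityMeasure γ)
    (hfst : γ.map Prod.fst = μ) (hsnd : γ.map Prod.snd = ν)
    (hcoupling : γ {p | Δ < ∑ i, |p.1 i - p.2 i|} = 0) :
    ∀ S : Set (Fin d → ℝ), MeasurableSet S →
      mconv μ (laplacePi d (Δ / ε)) S
          ≤ ENNReal.ofReal (Real.exp ε) * mconv ν (laplacePi d (Δ / ε)) S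
      ∧ mconv ν (laplacePi d (Δ / ε)) S
          ≤ ENNReal.ofReal (Real.exp ε) * mconv μ (laplacePi d (Δ / ε)) S := by
  intro S hS
  constructor
  · exact one_direction d Δ ε hΔ hε μ ν γ hγ hfst hsnd hcoupling S hS
  · -- apply the lemma to the swapped coupling
    set γ' := γ.map Prod.swap with hγ'def
    have hγ' : IsProbabilityMeasure γ' := Measure.isProbabilityMeasure_map measurable_swap.aemeasurable
    have hfst' : γ'.map Prod.fst = ν := by
      rw [hγ'def, Measure.map_map measurable_fst measurable_swap]
      exact hsnd
    have hsnd' : γ'.map Prod.snd = μ := by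
      rw [hγ'def, Measure.map_map measurable_snd measurable_swap]
      exact hfst
    have hmeasset : MeasurableSet {p : (Fin d → ℝ) × (Fin d → ℝ) | Δ < ∑ i, |p.1 i - p.2 i|} := by
      apply measurableSet_lt measurable_const
      apply Finset.measurable_sum
      intro i _
      exact ((measurable_fst.eval.sub measurable_snd.eval).abs)
    have hcoupling' : γ' {p | Δ < ∑ i, |p.1 i - p.2 i|} = 0 := by
      rw [hγ'def, Measure.map_apply measurable_swap hmeasset]
      have hpre : Prod.swap ⁻¹' {p : (Fin d → ℝ) × (Fin d → ℝ) | Δ < ∑ i, |p.1 i - p.2 i|}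
          = {p | Δ < ∑ i, |p.1 i - p.2 i|} := by
        ext p
        simp only [Set.mem_preimage, Prod.fst_swap, Prod.snd_swap, Set.mem_setOf_eq]
        have hsum : ∑ i, |p.2 i - p.1 i| = ∑ i, |p.1 i - p.2 i| :=
          Finset.sum_congr rfl (fun i _ => abs_sub_comm _ _)
        rw [hsum]
      rw [hpre, hcoupling]
    exact one_direction d Δ ε hΔ hε ν μ γ' hγ' hfst' hsnd' hcoupling' S hS

end
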